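/- Let ω be an m×n partial permutation, (α,β) ∈ D(ω) with k := rk(ω_{[α,β]}) ≥ 1, and let R(α,β) = {r₁ < ⋯ < r_k} be the rows above α containing a 1 of ω in a column left of β, and C(α,β) = {ω̃(r₁), …, ω̃(r_k)} the corresponding columns. If A = λωμ for some invertible lower triangular λ ∈ M_{m,m}(ℝ) and invertible upper triangular μ ∈ M_{n,n}(ℝ), then the k×k submatrix A|_{R(α,β), C(α,β)} has nonzero determinant; in fact |det(A|_{R(α,β), C(α,β)})| = |det(λ|_{R,R})| · |det(μ|_{C,C})| where λ|_{R,R} and μ|_{C,C} are the principal submatrices of λ and μ on the index sets R(α,β) and C(α,β). -/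

import Mathlib

attribute [local instance] Classical.propDecidable

/-- A partial permutation. -/
def IsPartialPerm {m n : ℕ} (ω : Matrix (Fin m) (Fin n) ℝ) : Prop :=
  (∀ i j, ω i j = 0 ∨ ω i j = 1) ∧
  (∀ i j j', ω i j = 1 → ω i j' = 1 → j = j') ∧
  (∀ i i' j, ω i j = 1 → ω i' j = 1 → i = i')

def rowIdx {m n : ℕ} (i : Fin m) : Fin (m + n) := Fin.castLE (Nat.le_add_right m n) i

def colIdx {m n : ℕ} (j : Fin n) : Fin (m + n) :=
  ⟨j.val, lt_of_lt_of_le j.isLt (Nat.le_add_left n (m))⟩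

/-- Upper-left `p × q` submatrix. -/
def ulSub {m n : ℕ} (A : Matrix (Fin m) (Fin n) ℝ) (p q : ℕ) (hp : p ≤ m) (hq : q ≤ n) :
    Matrix (Fin p) (Fin q) ℝ :=
  A.submatrix (Fin.castLE hp) (Fin.castLE hq)

/-- `R(α,β)`: rows `r < α` of `ω` with a `1` in some column `c < β`. -/
noncomputable def RSet {m n : ℕ} (ω : Matrix (Fin m) (Fin n) ℝ) (i : Fin m) (j : Fin n) :
    Finset (Fin m) :=
  Finset.univ.filter fun r => r < i ∧ ∃ c : Fin n, c < j ∧ ω r c = 1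

/-- `C(α,β)`: columns `c < β` of `ω` with a `1` in some row `r < α`. -/
noncomputable def CSet {m n : ℕ} (ω : Matrix (Fin m) (Fin n) ℝ) (i : Fin m) (j : Fin n) :
    Finset (Fin n) :=
  Finset.univ.filter fun c => c < j ∧ ∃ r : Fin m, r < i ∧ ω r c = 1

/-- for `(α,β)` in the Rothe diagram of `ω` with `k = rk(ω_{[α,β]}) ≥ 1`,
and `A = λ ω μ` with `λ` lower triangular invertible and `μ` upper triangular
invertible, the `k × k` submatrix of `A` on rows `R(α,β)` and columns `C(α,β)` has
`|det| = |det λ|_{R,R}| ⬝ |det μ|_{C,C}|`, and in particular nonzero determinant. -/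
theorem det_restriction_ne_zero {m n : ℕ}
    (ω : Matrix (Fin m) (Fin n) ℝ) (hω : IsPartialPerm ω)
    (σ : Equiv.Perm (Fin (m + n)))
    (hext : ∀ (i : Fin m) (j : Fin n), ω i j = 1 ↔ σ (rowIdx i) = colIdx j)
    (h1 : ∀ (i : Fin (m + n)) (h : i.val + 1 < m + n), m ≤ i.val → σ i < σ ⟨i.val + 1, h⟩)
    (h2 : ∀ (j : Fin (m + n)) (h : j.val + 1 < m + n), n ≤ j.val →
      σ.symm j < σ.symm ⟨j.val + 1, h⟩)
    (α : Fin m) (β : Fin n)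
    (hD : colIdx β < σ (rowIdx α) ∧ rowIdx α < σ.symm (colIdx β))
    (k : ℕ) (hk1 : 1 ≤ k)
    (hkdef : k = (ulSub ω (α.val + 1) (β.val + 1) α.isLt β.isLt).rank)
    (hR : (RSet ω α β).card = k) (hC : (CSet ω α β).card = k)
    (L : Matrix (Fin m) (Fin m) ℝ) (U : Matrix (Fin n) (Fin n) ℝ)
    (hL : ∀ i j : Fin m, i < j → L i j = 0) (hLdet : IsUnit L.det)
    (hU : ∀ i j : Fin n, j < i → U i j = 0) (hUdet : IsUnit U.det)
    (A : Matrix (Fin m) (Fin n) ℝ) (hA : A = L * ω * U) :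
    |(Matrix.of fun a b : Fin k =>
        A ((RSet ω α β).orderIsoOfFin hR a : Fin m)
          ((CSet ω α β).orderIsoOfFin hC b : Fin n)).det| =
      |(Matrix.of fun a b : Fin k =>
          L ((RSet ω α β).orderIsoOfFin hR a : Fin m)
            ((RSet ω α β).orderIsoOfFin hR b : Fin m)).det| *
      |(Matrix.of fun a b : Fin k =>
          U ((CSet ω α β).orderIsoOfFin hC a : Fin n)
            ((CSet ω α β).orderIsoOfFin hC b : Fin n)).det| ∧
    (Matrix.of fun a b : Fin k =>
        A ((RSet ω α β).orderIsoOfFin hR a : Fin m)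
          ((CSet ω α β).orderIsoOfFin hC b : Fin n)).det ≠ 0 := by
  classical
  obtain ⟨hω01, hωrow, hωcol⟩ := hω
  set R : Finset (Fin m) := RSet ω α β with hRdef
  set C : Finset (Fin n) := CSet ω α β with hCdef
  set e := R.orderIsoOfFin hR with he
  set f := C.orderIsoOfFin hC with hf
  have hRmem : ∀ r : Fin m, r ∈ R ↔ r < α ∧ ∃ c : Fin n, c < β ∧ ω r c = 1 := by
    intro r; simp [hRdef, RSet]
  have hCmem : ∀ c : Fin n, c ∈ C ↔ c < β ∧ ∃ r : Fin m, r < α ∧ ω r c = 1 := by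
    intro c; simp [hCdef, CSet]
  have heR : ∀ a : Fin k, (e a : Fin m) ∈ R := fun a => (e a).2
  have hfC : ∀ b : Fin k, (f b : Fin n) ∈ C := fun b => (f b).2
  -- the column associated to each row in R
  have hcol : ∀ a : Fin k, ∃ c : Fin n, c < β ∧ ω (e a) c = 1 :=
    fun a => ((hRmem _).1 (heR a)).2
  choose col hcolβ hcol1 using hcol
  have hcolC : ∀ a : Fin k, col a ∈ C := fun a =>
    (hCmem _).2 ⟨hcolβ a, ⟨e a, ((hRmem _).1 (heR a)).1, hcol1 a⟩⟩
  -- the induced permutation of Fin k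
  set g : Fin k → Fin k := fun a => f.symm ⟨col a, hcolC a⟩ with hg
  have hginj : Function.Injective g := by
    intro a a' h
    have hcc : col a = col a' := by
      have := congrArg (fun x => ((f x : C) : Fin n)) h
      simpa [hg] using this
    have : (e a : Fin m) = (e a' : Fin m) :=
      hωcol _ _ (col a) (hcol1 a) (hcc ▸ hcol1 a')
    exact e.injective (Subtype.ext this)
  set τ : Equiv.Perm (Fin k) :=
    Equiv.ofBijective g ((Finite.injective_iff_bijective).mp hginj) with hτ
  have hτa : ∀ a, τ a = g a := fun a => rfl
  have hfτ : ∀ a : Fin k, (f (τ a) : Fin n) = col a := by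
    intro a; rw [hτa, hg]; simp
  -- the submatrices
  set A' : Matrix (Fin k) (Fin k) ℝ := Matrix.of fun a b => A (e a) (f b) with hA'
  set L' : Matrix (Fin k) (Fin k) ℝ := Matrix.of fun a b => L (e a) (e b) with hL'
  set U' : Matrix (Fin k) (Fin k) ℝ := Matrix.of fun a b => U (f a) (f b) with hU'
  set W : Matrix (Fin k) (Fin k) ℝ := Matrix.of fun a b => ω (e a) (f b) with hW
  -- W is the permutation matrix of τ
  have hWperm : W = τ.permMatrix ℝ := by
    ext a b
    rw [Equiv.Perm.permMatrix, PEquiv.toMatrix_toPEquiv_eq, Matrix.submatrix_apply, id_eq, Matrix.one_apply]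
    by_cases hb : τ a = b
    · subst hb
      simp only [if_pos rfl, hW, Matrix.of_apply]
      rw [show (f (τ a) : Fin n) = col a from hfτ a]
      exact hcol1 a
    · rw [if_neg hb]
      simp only [hW, Matrix.of_apply]
      rcases hω01 (e a) (f b) with h | h
      · exact h
      · exfalso
        apply hb
        have : col a = (f b : Fin n) := hωrow _ _ _ (hcol1 a) h
        apply f.injective
        apply Subtype.ext
        rw [hfτ a, this]
  -- key matrix identity
  have hkey : A' = L' * W * U' := by
    ext a b
    -- zero terms
    have hzero : ∀ i : Fin m, ∀ j : Fin n, i ∉ R ∨ j ∉ C →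
        L (e a) i * ω i j * U j (f b) = 0 := by
      intro i j hij
      rcases hω01 i j with h0 | h1
      · rw [h0, mul_zero, zero_mul]
      by_cases hLi : (e a : Fin m) < i
      · rw [hL _ _ hLi, zero_mul, zero_mul]
      by_cases hUj : (f b : Fin n) < j
      · rw [hU _ _ hUj, mul_zero]
      push_neg at hLi hUj
      have hiα : i < α := lt_of_le_of_lt hLi ((hRmem _).1 (heR a)).1
      have hjβ : j < β := lt_of_le_of_lt hUj ((hCmem _).1 (hfC b)).1
      exfalso
      rcases hij with hij | hij
      · exact hij ((hRmem i).2 ⟨hiα, j, hjβ, h1⟩)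
      · exact hij ((hCmem j).2 ⟨hjβ, i, hiα, h1⟩)
    have step1 : A (e a) (f b) =
        ∑ i : Fin m, ∑ j : Fin n, L (e a) i * ω i j * U j (f b) := by
      rw [hA]
      simp only [Matrix.mul_apply, Finset.sum_mul]
      exact Finset.sum_comm
    have step2 : (∑ i : Fin m, ∑ j : Fin n, L (e a) i * ω i j * U j (f b)) =
        ∑ i ∈ R, ∑ j ∈ C, L (e a) i * ω i j * U j (f b) := by
      rw [← Finset.sum_subset (Finset.subset_univ R)]
      · apply Finset.sum_congr rfl
        intro i _
        rw [← Finset.sum_subset (Finset.subset_univ C)]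
        intro j _ hj
        exact hzero i j (Or.inr hj)
      · intro i _ hi
        apply Finset.sum_eq_zero
        intro j _
        exact hzero i j (Or.inl hi)
    have step3 : (∑ i ∈ R, ∑ j ∈ C, L (e a) i * ω i j * U j (f b)) =
        ∑ x : Fin k, ∑ y : Fin k, L (e a) (e x) * ω (e x) (f y) * U (f y) (f b) := by
      rw [← Finset.sum_coe_sort R, ← Equiv.sum_comp e.toEquiv]
      apply Finset.sum_congr rfl
      intro x _
      rw [← Finset.sum_coe_sort C, ← Equiv.sum_comp f.toEquiv]
      rfl
    have step4 : (L' * W * U') a b =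
        ∑ x : Fin k, ∑ y : Fin k, L (e a) (e x) * ω (e x) (f y) * U (f y) (f b) := by
      rw [Matrix.mul_apply, Finset.sum_comm]
      apply Finset.sum_congr rfl
      intro x _
      rw [Matrix.mul_apply, Finset.sum_mul]
      rfl
    show A (e a) (f b) = (L' * W * U') a b
    rw [step1, step2, step3, step4]
  -- determinants of triangular pieces
  have hLdiag : ∀ i : Fin m, L i i ≠ 0 := by
    have hdet : L.det = ∏ i, L i i :=
      Matrix.det_of_lowerTriangular L (fun i j h => hL i j (by simpa using h))
    have := hLdet.ne_zero
    rw [hdet] at this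
    intro i
    exact Finset.prod_ne_zero_iff.mp this i (Finset.mem_univ i)
  have hUdiag : ∀ i : Fin n, U i i ≠ 0 := by
    have hdet : U.det = ∏ i, U i i :=
      Matrix.det_of_upperTriangular (fun i j h => hU i j (by simpa using h))
    have := hUdet.ne_zero
    rw [hdet] at this
    intro i
    exact Finset.prod_ne_zero_iff.mp this i (Finset.mem_univ i)
  have hL'det : L'.det = ∏ a : Fin k, L (e a) (e a) :=
    Matrix.det_of_lowerTriangular L' (fun i j h => by
      exact hL _ _ (e.strictMono (by simpa using h)))
  have hU'det : U'.det = ∏ a : Fin k, U (f a) (f a) :=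
    Matrix.det_of_upperTriangular (fun i j h => by
      exact hU _ _ (f.strictMono (by simpa using h)))
  have hL'ne : L'.det ≠ 0 := by
    rw [hL'det]
    exact Finset.prod_ne_zero_iff.mpr fun a _ => hLdiag _
  have hU'ne : U'.det ≠ 0 := by
    rw [hU'det]
    exact Finset.prod_ne_zero_iff.mpr fun a _ => hUdiag _
  have hWdet : |W.det| = 1 := by
    rw [hWperm, Matrix.det_permutation]
    rcases Int.units_eq_one_or (Equiv.Perm.sign τ) with h | h <;> rw [h] <;> norm_num
  have hdetA' : A'.det = L'.det * W.det * U'.det := by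
    rw [hkey, Matrix.det_mul, Matrix.det_mul]
  constructor
  · show |A'.det| = |L'.det| * |U'.det|
    rw [hdetA', abs_mul, abs_mul, hWdet, mul_one]
  · show A'.det ≠ 0
    rw [hdetA']
    refine mul_ne_zero (mul_ne_zero hL'ne ?_) hU'ne
    intro h
    rw [h] at hWdet
    simp at hWdet
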